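/- For all a, b ∈ F(A) there is a sequence of pairs (u₀, v₀), (u₁, v₁), …, (u_k, v_k) in F(A) × F(A) with k = |b|, such that (u₀, v₀) = (a·b, 1), (u_k, v_k) = (a, b), each consecutive pair is related by R in one direction or the other (i.e. R (uᵢ, vᵢ) (uᵢ₊₁, vᵢ₊₁) or R (uᵢ₊₁, vᵢ₊₁) (uᵢ, vᵢ) for each i < k), and |uᵢ| + |vᵢ| ≤ |a| + |b| for every i ≤ k. -/

import Mathlib

namespace SplitMachine

variable {A : Type*} [DecidableEq A]

/-- `R (a, b) (c, d)` iff `c = a · (of x)⁻¹` and `d = (of x) · b` for some `x ∈ A`. -/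
def R (P Q : FreeGroup A × FreeGroup A) : Prop :=
  ∃ x : A, Q.1 = P.1 * (FreeGroup.of x)⁻¹ ∧ Q.2 = FreeGroup.of x * P.2

lemma mk_single_false (x : A) :
    FreeGroup.mk [(x, false)] = (FreeGroup.of x)⁻¹ := by
  rw [FreeGroup.of, FreeGroup.inv_mk]; rfl

lemma mk_single_true (x : A) :
    FreeGroup.mk [(x, true)] = FreeGroup.of x := rfl

/-- From `(a·b, 1)` one can reach `(a, b)` by a chain of `|b|` `R`-steps (in either
direction), never exceeding total length `|a| + |b|`. -/
theorem exists_chain_split (a b : FreeGroup A) :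
    ∃ u v : ℕ → FreeGroup A,
      u 0 = a * b ∧ v 0 = 1 ∧
      u b.toWord.length = a ∧ v b.toWord.length = b ∧
      (∀ i < b.toWord.length,
        R (u i, v i) (u (i + 1), v (i + 1)) ∨ R (u (i + 1), v (i + 1)) (u i, v i)) ∧
      (∀ i ≤ b.toWord.length,
        (u i).toWord.length + (v i).toWord.length ≤ a.toWord.length + b.toWord.length) := by
  set w := b.toWord with hw
  set n := w.length with hn
  refine ⟨fun i => a * FreeGroup.mk (w.take (n - i)),
          fun i => FreeGroup.mk (w.drop (n - i)), ?_, ?_, ?_, ?_, ?_, ?_⟩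
  · simp [List.take_of_length_le (le_of_eq hn.symm), hw, FreeGroup.mk_toWord]
    rw [hn, hw]
    simp [FreeGroup.mk_toWord]
  · simp [List.drop_of_length_le (le_of_eq hn.symm)]
    rfl
  · simp
    rfl
  · simp [hw, FreeGroup.mk_toWord]
  · intro i hi
    have hne : w.drop (n - (i + 1)) ≠ [] := by
      intro h
      have := congrArg List.length h
      simp at this
      omega
    obtain ⟨p, t, hpt⟩ := List.exists_cons_of_ne_nil hne
    have hd : w.drop (n - i) = t := by
      have h1 : w.drop (n - i) = List.drop 1 (w.drop (n - (i + 1))) := by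
        rw [List.drop_drop]
        congr 1
        omega
      rw [h1, hpt, List.drop_one, List.tail_cons]
    have ht : w.take (n - i) = w.take (n - (i + 1)) ++ [p] := by
      have h2 : n - i = (n - (i + 1)) + 1 := by omega
      rw [h2, List.take_add, hpt]
      norm_num
    obtain ⟨x, e⟩ := p
    rcases e with _ | _
    · -- letter is (x, false): step goes backwards
      right
      refine ⟨x, ?_, ?_⟩
      · show a * FreeGroup.mk (w.take (n - i)) =
          a * FreeGroup.mk (w.take (n - (i + 1))) * (FreeGroup.of x)⁻¹
        rw [mul_assoc, ← mk_single_false, FreeGroup.mul_mk, ← ht]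
      · show FreeGroup.mk (w.drop (n - i)) =
          FreeGroup.of x * FreeGroup.mk (w.drop (n - (i + 1)))
        rw [hpt, hd, show ((x, false) :: t : List (A × Bool)) = [(x, false)] ++ t from rfl,
          ← FreeGroup.mul_mk, mk_single_false]
        group
    · -- letter is (x, true): step goes forwards
      left
      refine ⟨x, ?_, ?_⟩
      · show a * FreeGroup.mk (w.take (n - (i + 1))) =
          a * FreeGroup.mk (w.take (n - i)) * (FreeGroup.of x)⁻¹
        rw [mul_assoc, ht, ← mk_single_true, ← FreeGroup.mul_mk]
        group
      · show FreeGroup.mk (w.drop (n - (i + 1))) =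
          FreeGroup.of x * FreeGroup.mk (w.drop (n - i))
        rw [hpt, hd, ← mk_single_true, FreeGroup.mul_mk]
        rfl
  · intro i hi
    calc (a * FreeGroup.mk (w.take (n - i))).toWord.length +
          (FreeGroup.mk (w.drop (n - i))).toWord.length
        ≤ (a.toWord.length + (w.take (n - i)).length) + (w.drop (n - i)).length := by
          have h1 := FreeGroup.norm_mul_le a (FreeGroup.mk (w.take (n - i)))
          have h2 : (FreeGroup.mk (w.take (n - i))).toWord.length ≤ (w.take (n - i)).length :=
            FreeGroup.norm_mk_le
          have h3 : (FreeGroup.mk (w.drop (n - i))).toWord.length ≤ (w.drop (n - i)).length :=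
            FreeGroup.norm_mk_le
          simp only [FreeGroup.norm] at h1 h2 h3
          omega
      _ ≤ a.toWord.length + b.toWord.length := by
          simp [← hn]
          have hwl : w.length = b.toWord.length := by rw [hw]
          omega

end SplitMachine
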